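/- Suppose T ≤ 1 and there exists ν* with 0 < ν(t) ≤ ν* < 1 for all t ∈ [0,T]. Then for every 1 ≤ n ≤ N one has ∑_{k=1}^{n} b^{(ν)}_{k,1} ≤ T^{1−ν*}/(1−ν*). -/

import Mathlib

open Finset

/-- `Γ x ≥ 1` for `x ∈ (0,1]`, by convexity of `Γ` with `Γ 1 = Γ 2 = 1`. -/
lemma one_le_Gamma_aux {x : ℝ} (hx : 0 < x) (hx1 : x ≤ 1) : 1 ≤ Real.Gamma x := by
  have hconv := Real.convexOn_Gamma
  have hx2 : 0 < 2 - x := by linarith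
  have ha : (0:ℝ) ≤ 1 / (2 - x) := by positivity
  have hb : (0:ℝ) ≤ (1 - x) / (2 - x) := by
    apply div_nonneg <;> linarith
  have hab : 1 / (2 - x) + (1 - x) / (2 - x) = 1 := by
    field_simp
    ring
  have h := hconv.2 (Set.mem_Ioi.mpr hx) (Set.mem_Ioi.mpr (by norm_num : (0:ℝ) < 2)) ha hb hab
  have hcomb : (1 / (2 - x)) • x + ((1 - x) / (2 - x)) • (2:ℝ) = 1 := by
    simp only [smul_eq_mul]
    rw [div_mul_eq_mul_div, div_mul_eq_mul_div, ← add_div, div_eq_one_iff_eq hx2.ne']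
    ring
  rw [hcomb] at h
  have hΓ1 : Real.Gamma 1 = 1 := Real.Gamma_one
  have hΓ2 : Real.Gamma 2 = 1 := by
    rw [show (2:ℝ) = 1 + 1 by norm_num, Real.Gamma_add_one one_ne_zero, Real.Gamma_one]; norm_num
  rw [hΓ1, hΓ2, smul_eq_mul, smul_eq_mul, mul_one] at h
  nlinarith [mul_pos (by positivity : (0:ℝ) < 1/(2-x)) hx]

/-- monotonicity of `α ↦ (d^α - c^α)/α` (decreasing) for `0 ≤ c ≤ d ≤ 1`. -/
lemma pow_diff_div_mono {c d α' α : ℝ} (hc : 0 ≤ c) (hcd : c ≤ d) (hd : d ≤ 1)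
    (hα' : 0 < α') (hle : α' ≤ α) (hα : α < 1) :
    (d ^ α - c ^ α) / α ≤ (d ^ α' - c ^ α') / α' := by
  have hα0 : 0 < α := lt_of_lt_of_le hα' hle
  have h1 : (∫ x in c..d, x ^ (α - 1)) = (d ^ α - c ^ α) / α := by
    rw [integral_rpow (Or.inl (by linarith))]
    norm_num
  have h2 : (∫ x in c..d, x ^ (α' - 1)) = (d ^ α' - c ^ α') / α' := by
    rw [integral_rpow (Or.inl (by linarith))]
    norm_num
  rw [← h1, ← h2]
  apply intervalIntegral.integral_mono_on hcd
    (intervalIntegral.intervalIntegrable_rpow' (by linarith))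
    (intervalIntegral.intervalIntegrable_rpow' (by linarith))
  intro x hx
  rcases eq_or_lt_of_le (hc.trans hx.1) with h0 | h0
  · rw [← h0, Real.zero_rpow (by linarith), Real.zero_rpow (by linarith)]
  · exact Real.rpow_le_rpow_of_exponent_ge h0 (hx.2.trans hd) (by linarith)

/-- Suppose T ≤ 1 and 0 < ν(t) ≤ ν* < 1 on [0,T]. Then for every
1 ≤ n ≤ N one has `∑_{k=1}^{n} b k 1 ≤ T^(1-ν*)/(1-ν*)`. -/
theorem l1_first_coeffs_sum_le_of_T_le_one
    (T : ℝ) (hT : 0 < T) (hT1 : T ≤ 1) (N : ℕ) (hN : 0 < N)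
    (τ : ℝ) (hτ : τ = T / N)
    (t : ℕ → ℝ) (ht : ∀ k, t k = k * τ)
    (ν : ℝ → ℝ) (νS : ℝ) (hνS : νS < 1)
    (hν : ∀ s ∈ Set.Icc (0 : ℝ) T, 0 < ν s ∧ ν s ≤ νS)
    (b : ℕ → ℕ → ℝ)
    (hb : ∀ n k, 1 ≤ k → k ≤ n → n ≤ N →
      b n k = (1 / Real.Gamma (2 - ν (t n))) *
        ((t n - t (k - 1)) ^ (1 - ν (t n)) - (t n - t k) ^ (1 - ν (t n))))
    (n : ℕ) (hn1 : 1 ≤ n) (hnN : n ≤ N) :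
    ∑ k ∈ Finset.Icc 1 n, b k 1 ≤ T ^ (1 - νS) / (1 - νS) := by
  have hNpos : (0:ℝ) < N := by exact_mod_cast hN
  have hτ0 : 0 < τ := by rw [hτ]; positivity
  have hνS0 : 0 < νS := by
    have := hν 0 (Set.mem_Icc.mpr ⟨le_refl 0, hT.le⟩)
    linarith [this.1, this.2]
  have hαS : 0 < 1 - νS := by linarith
  -- basic facts about the mesh
  have ht0 : t 0 = 0 := by simp [ht 0]
  have htnonneg : ∀ k, 0 ≤ t k := fun k => by rw [ht k]; positivity
  have htleT : ∀ k, k ≤ N → t k ≤ T := by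
    intro k hk
    rw [ht k, hτ]
    rw [div_eq_mul_inv, ← mul_assoc]
    have hkN : (k:ℝ) ≤ N := by exact_mod_cast hk
    calc (k:ℝ) * T * (N:ℝ)⁻¹ ≤ (N:ℝ) * T * (N:ℝ)⁻¹ := by
          apply mul_le_mul_of_nonneg_right (by nlinarith) (by positivity)
      _ = T := by field_simp
  have htmono : ∀ k, t k ≤ t (k+1) := by
    intro k
    rw [ht k, ht (k+1)]
    push_cast
    nlinarith
  -- termwise bound
  have key : ∀ k ∈ Finset.Icc 1 n,
      b k 1 ≤ (t k ^ (1 - νS) - t (k-1) ^ (1 - νS)) / (1 - νS) := by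
    intro k hk
    rw [Finset.mem_Icc] at hk
    obtain ⟨hk1, hkn⟩ := hk
    have hkN : k ≤ N := le_trans hkn hnN
    have hνk := hν (t k) (Set.mem_Icc.mpr ⟨htnonneg k, htleT k hkN⟩)
    obtain ⟨hνk0, hνkS⟩ := hνk
    set νk := ν (t k) with hνkdef
    have hαk0 : 0 < 1 - νk := by linarith
    have hαk1 : 1 - νk < 1 := by linarith
    -- t k - t 1 = t (k-1)
    have hsub : t k - t 1 = t (k - 1) := by
      rw [ht k, ht 1, ht (k-1)]
      have : ((k - 1 : ℕ) : ℝ) = (k:ℝ) - 1 := by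
        rw [Nat.cast_sub hk1]; norm_num
      rw [this]
      ring
    have htk1le : t (k-1) ≤ t k := by
      have h := htmono (k-1)
      rwa [show k - 1 + 1 = k from by omega] at h
    have htk1 : t k ≤ 1 := le_trans (htleT k hkN) hT1
    -- rewrite b k 1
    rw [hb k 1 le_rfl hk1 hkN, Nat.sub_self, ht0, sub_zero, hsub, ← hνkdef]
    -- Γ(2 - νk) ≥ 1 - νk
    have hΓ : 1 - νk ≤ Real.Gamma (2 - νk) := by
      have h2 : (2:ℝ) - νk = (1 - νk) + 1 := by ring
      rw [h2, Real.Gamma_add_one (by linarith)]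
      nlinarith [one_le_Gamma_aux hαk0 (by linarith : 1 - νk ≤ 1)]
    have hnum : 0 ≤ t k ^ (1 - νk) - t (k-1) ^ (1 - νk) := by
      have := Real.rpow_le_rpow (htnonneg (k-1)) htk1le hαk0.le
      linarith
    calc (1 / Real.Gamma (2 - νk)) * (t k ^ (1 - νk) - t (k-1) ^ (1 - νk))
        = (t k ^ (1 - νk) - t (k-1) ^ (1 - νk)) / Real.Gamma (2 - νk) := by ring
      _ ≤ (t k ^ (1 - νk) - t (k-1) ^ (1 - νk)) / (1 - νk) := by
          apply div_le_div_of_nonneg_left hnum hαk0 hΓ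
      _ ≤ (t k ^ (1 - νS) - t (k-1) ^ (1 - νS)) / (1 - νS) :=
          pow_diff_div_mono (htnonneg (k-1)) htk1le htk1 hαS (by linarith) hαk1
  -- sum and telescope
  calc ∑ k ∈ Finset.Icc 1 n, b k 1
      ≤ ∑ k ∈ Finset.Icc 1 n, (t k ^ (1 - νS) - t (k-1) ^ (1 - νS)) / (1 - νS) :=
        Finset.sum_le_sum key
    _ = ∑ k ∈ Finset.Icc 1 n,
        (t k ^ (1 - νS) / (1 - νS) - t (k-1) ^ (1 - νS) / (1 - νS)) := by
        apply Finset.sum_congr rfl; intro k _; rw [sub_div]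
    _ = ∑ i ∈ Finset.range n,
        (t (1 + i) ^ (1 - νS) / (1 - νS) - t ((1 + i) - 1) ^ (1 - νS) / (1 - νS)) := by
        rw [← Finset.Ico_add_one_right_eq_Icc, Finset.sum_Ico_eq_sum_range]
        simp
    _ = t n ^ (1 - νS) / (1 - νS) - t 0 ^ (1 - νS) / (1 - νS) := by
        have : ∀ i, (1 + i) - 1 = i := fun i => by omega
        simp_rw [this, add_comm 1]
        exact Finset.sum_range_sub (fun i => t i ^ (1 - νS) / (1 - νS)) n
    _ = t n ^ (1 - νS) / (1 - νS) := by
        rw [ht0, Real.zero_rpow (by linarith), zero_div, sub_zero]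
    _ ≤ T ^ (1 - νS) / (1 - νS) := by
        gcongr <;> first
          | exact htnonneg n
          | exact htleT n hnN
          | linarith
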